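/- arXiv:2108.02715 — 2 statements merged into one kernel-verified Lean document; each statement's English description precedes it below -/
import Mathlib

section
/- For every natural number k ≥ 1, real p ∈ (0,1], and real q > 1, a binomial B(k,p) random variable X̂ satisfies P(k·p/q ≤ X̂ ≤ q·k·p) ≥ 1 − exp(−k·(pq−p)²/(2σ² + 2(pq−p)/3)) − exp(−k·(p−p/q)²/(2σ² + 2(p−p/q)/3)), where σ² = p(1−p). (Bound 2: Q-error bound from Bernstein's inequality for uniform sampling with replacement.) -/
open Classical in
/-- Probability that a binomial B(k,p) random variable satisfies predicate `P`. -/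
noncomputable def binomProb (k : ℕ) (p : ℝ) (P : ℕ → Prop) : ℝ :=
  ∑ i ∈ Finset.range (k + 1),
    if P i then (k.choose i : ℝ) * p ^ i * (1 - p) ^ (k - i) else 0

private lemma nonneg_of_deriv (f f' : ℝ → ℝ) (hd : ∀ x, HasDerivAt f (f' x) x)
    (h0 : f 0 = 0) (hf' : ∀ x, 0 ≤ x → 0 ≤ f' x) {t : ℝ} (ht : 0 ≤ t) : 0 ≤ f t := by
  have hmono : MonotoneOn f (Set.Ici (0:ℝ)) := by
    apply monotoneOn_of_deriv_nonneg (convex_Ici 0)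
    · exact fun x _ => (hd x).continuousAt.continuousWithinAt
    · exact fun x _ => ((hd x).differentiableAt).differentiableWithinAt
    · intro x hx
      rw [(hd x).deriv]
      exact hf' x (le_of_lt (by simpa using hx))
  have := hmono Set.self_mem_Ici (Set.mem_Ici.mpr ht) ht
  linarith [h0 ▸ this]

private lemma hd_g (x : ℝ) :
    HasDerivAt (fun t : ℝ => Real.exp t - 1 - t) (Real.exp x - 1) x := by
  have := ((Real.hasDerivAt_exp x).sub_const 1).sub (hasDerivAt_id' (x := x))
  exact this

private lemma exp_ge_quad {t : ℝ} (ht : 0 ≤ t) : 1 + t + t^2/2 ≤ Real.exp t := by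
  have h := nonneg_of_deriv (fun t => Real.exp t - 1 - t - t^2/2)
    (fun t => Real.exp t - 1 - t) (fun x => by
      have h1 : HasDerivAt (fun t : ℝ => t^2/2) ((2 * x^1)/2) x :=
        (hasDerivAt_pow 2 x).div_const 2
      exact ((hd_g x).sub h1).congr_deriv (by ring))
    (by norm_num) (fun x hx => by
      have := Real.add_one_le_exp x
      show 0 ≤ Real.exp x - 1 - x
      linarith) ht
  have h2 : (0:ℝ) ≤ Real.exp t - 1 - t - t^2/2 := h
  linarith

private lemma exp_neg_le {s : ℝ} (hs : 0 ≤ s) : Real.exp (-s) ≤ 1 - s + s^2/2 := by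
  have hq := exp_ge_quad hs
  have hprod : Real.exp (-s) * Real.exp s = 1 := by rw [← Real.exp_add]; simp
  have hpos := Real.exp_pos (-s)
  nlinarith [sq_nonneg (s^2), sq_nonneg s, Real.exp_pos s]

private lemma exp_convex_aux {y t : ℝ} (hy0 : 0 ≤ y) (hy1 : y ≤ 1) :
    Real.exp (y * t) ≤ 1 - y + y * Real.exp t := by
  have h := convexOn_exp.2 (Set.mem_univ (0:ℝ)) (Set.mem_univ t)
    (by linarith : (0:ℝ) ≤ 1 - y) hy0 (by ring)
  simpa using h

private lemma g_mul_le {y : ℝ} (hy0 : 0 ≤ y) (hy1 : y ≤ 1) {t : ℝ} (ht : 0 ≤ t) :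
    Real.exp (y * t) - 1 - y * t ≤ y^2 * (Real.exp t - 1 - t) := by
  have h := nonneg_of_deriv
    (fun t => y^2 * (Real.exp t - 1 - t) - (Real.exp (y * t) - 1 - y * t))
    (fun t => y^2 * (Real.exp t - 1) - (Real.exp (y * t) * y - y))
    (fun x => by
      have hyx : HasDerivAt (fun t : ℝ => y * t) y x := by
        simpa using (hasDerivAt_id' (x := x)).const_mul y
      have h1 : HasDerivAt (fun t : ℝ => Real.exp (y * t)) (Real.exp (y * x) * y) x :=
        hyx.exp
      have h2 : HasDerivAt (fun t : ℝ => y^2 * (Real.exp t - 1 - t))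
          (y^2 * (Real.exp x - 1)) x := (hd_g x).const_mul (y^2)
      have h3 : HasDerivAt (fun t : ℝ => Real.exp (y * t) - 1 - y * t)
          (Real.exp (y * x) * y - y) x := ((h1.sub_const 1).sub hyx).congr_deriv (by ring)
      exact (h2.sub h3).congr_deriv (by ring))
    (by simp) (fun x hx => by
      have hc := exp_convex_aux hy0 hy1 (t := x)
      show 0 ≤ y^2 * (Real.exp x - 1) - (Real.exp (y * x) * y - y)
      nlinarith) ht
  have h2 : (0:ℝ) ≤ y^2 * (Real.exp t - 1 - t) - (Real.exp (y * t) - 1 - y * t) := h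
  linarith

private lemma g_bound {t : ℝ} (ht : 0 ≤ t) :
    (2 - 2*t/3) * (Real.exp t - 1 - t) ≤ t^2 := by
  have hd23 : ∀ z : ℝ, HasDerivAt (fun t : ℝ => 2*t/3 - 2/3) (2/3) z := fun z => by
    simpa using (((hasDerivAt_id' (x := z)).const_mul 2).div_const 3).sub_const (2/3)
  have h3 : ∀ x : ℝ, 0 ≤ x → 0 ≤ 2/3 + (2*x/3 - 2/3) * Real.exp x := by
    intro x hx
    have h := nonneg_of_deriv (fun t => 2/3 + (2*t/3 - 2/3) * Real.exp t)
      (fun t => (2*t/3) * Real.exp t)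
      (fun z => by
        have := ((hd23 z).mul (Real.hasDerivAt_exp z)).const_add (2/3)
        exact this.congr_deriv (by ring)) (by norm_num)
      (fun z hz => by
        show (0:ℝ) ≤ (2*z/3) * Real.exp z
        positivity) hx
    have h2 : (0:ℝ) ≤ 2/3 + (2*x/3 - 2/3) * Real.exp x := h
    linarith
  have h2 : ∀ x : ℝ, 0 ≤ x →
      0 ≤ 2*x + (2/3)*(Real.exp x - 1 - x) - (2 - 2*x/3)*(Real.exp x - 1) := by
    intro x hx
    have h := nonneg_of_deriv
      (fun t => 2*t + (2/3)*(Real.exp t - 1 - t) - (2 - 2*t/3)*(Real.exp t - 1))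
      (fun t => 2/3 + (2*t/3 - 2/3) * Real.exp t)
      (fun z => by
        have e1 : HasDerivAt (fun t : ℝ => 2*t) 2 z := by
          simpa using (hasDerivAt_id' (x := z)).const_mul 2
        have e2 : HasDerivAt (fun t : ℝ => (2/3)*(Real.exp t - 1 - t))
            ((2/3)*(Real.exp z - 1)) z := (hd_g z).const_mul (2/3)
        have e3a : HasDerivAt (fun t : ℝ => 2 - 2*t/3) (-(2/3)) z := by
          simpa using (((hasDerivAt_id' (x := z)).const_mul 2).div_const 3).const_sub 2
        have e3 := e3a.mul ((Real.hasDerivAt_exp z).sub_const 1)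
        exact ((e1.add e2).sub e3).congr_deriv (by ring)) (by norm_num) h3 hx
    have hh : (0:ℝ) ≤ 2*x + (2/3)*(Real.exp x - 1 - x) - (2 - 2*x/3)*(Real.exp x - 1) := h
    linarith
  have h := nonneg_of_deriv
    (fun t => t^2 - (2 - 2*t/3)*(Real.exp t - 1 - t))
    (fun t => 2*t + (2/3)*(Real.exp t - 1 - t) - (2 - 2*t/3)*(Real.exp t - 1))
    (fun z => by
      have e1 : HasDerivAt (fun t : ℝ => t^2) (2*z^1) z := hasDerivAt_pow 2 z
      have e2a : HasDerivAt (fun t : ℝ => 2 - 2*t/3) (-(2/3)) z := by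
        simpa using (((hasDerivAt_id' (x := z)).const_mul 2).div_const 3).const_sub 2
      have e2 := e2a.mul (hd_g z)
      exact (e1.sub e2).congr_deriv (by ring)) (by norm_num) h2 ht
  have hh : (0:ℝ) ≤ t^2 - (2 - 2*t/3)*(Real.exp t - 1 - t) := h
  linarith

private lemma mgf_bound {p t : ℝ} (hp0 : 0 ≤ p) (hp1 : p ≤ 1) (ht : 0 ≤ t) :
    (1 - p) * Real.exp (-(t*p)) + p * Real.exp ((1-p) * t) ≤
      Real.exp (p * (1-p) * (Real.exp t - 1 - t)) := by
  have g0 : 0 ≤ Real.exp t - 1 - t := by nlinarith [Real.add_one_le_exp t]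
  have h1 : Real.exp ((1-p) * t) ≤ 1 + (1-p) * t + (1-p)^2 * (Real.exp t - 1 - t) := by
    have := g_mul_le (by linarith : (0:ℝ) ≤ 1-p) (by linarith) ht
    linarith
  have h2 : Real.exp (-(t*p)) ≤ 1 - t*p + (t*p)^2/2 := exp_neg_le (by positivity)
  have h3 : (t*p)^2/2 ≤ p^2 * (Real.exp t - 1 - t) := by
    have := exp_ge_quad ht
    nlinarith [sq_nonneg p]
  have key : (1 - p) * Real.exp (-(t*p)) + p * Real.exp ((1-p) * t) ≤
      1 + p * (1-p) * (Real.exp t - 1 - t) := by nlinarith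
  calc _ ≤ 1 + p * (1-p) * (Real.exp t - 1 - t) := key
    _ ≤ _ := by linarith [Real.add_one_le_exp (p * (1-p) * (Real.exp t - 1 - t))]

private lemma bern_key {σ2 δ : ℝ} (hσ : 0 ≤ σ2) (hδ : 0 < δ) :
    σ2 * (Real.exp (δ/(σ2+δ/3)) - 1 - δ/(σ2+δ/3)) - (δ/(σ2+δ/3)) * δ ≤
      -(δ^2) / (2*σ2 + 2*δ/3) := by
  have hD : 0 < σ2 + δ/3 := by linarith
  set t := δ/(σ2+δ/3) with htdef
  have ht : 0 < t := div_pos hδ hD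
  have hE : t * (σ2 + δ/3) = δ := div_mul_cancel₀ δ (ne_of_gt hD)
  set g := Real.exp t - 1 - t with hg
  have g0 : 0 ≤ g := by
    have := Real.add_one_le_exp t
    rw [hg]; linarith
  have h5 : (2 - 2*t/3) * g ≤ t^2 := g_bound ht.le
  have e : t*σ2 = δ - t*δ/3 := by nlinarith [hE]
  have key' : 2*σ2*g*t ≤ (t*δ)*t := by
    calc 2*σ2*g*t = 2*g*(t*σ2) := by ring
      _ = 2*g*(δ - t*δ/3) := by rw [e]
      _ = δ*((2-2*t/3)*g) := by ring
      _ ≤ δ*t^2 := mul_le_mul_of_nonneg_left h5 hδ.le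
      _ = (t*δ)*t := by ring
  have key : 2*σ2*g ≤ t*δ := le_of_mul_le_mul_right key' ht
  have hc : (0:ℝ) < 2*σ2 + 2*δ/3 := by linarith
  rw [le_div_iff₀ hc]
  have k2 : 2*σ2*g*(σ2+δ/3) ≤ t*δ*(σ2+δ/3) := mul_le_mul_of_nonneg_right key hD.le
  have e2 : t*δ*(σ2+δ/3) = δ^2 := by linear_combination δ*hE
  nlinarith [k2, e2]

private lemma pmf_nonneg {k i : ℕ} {p : ℝ} (hp0 : 0 ≤ p) (hp1 : p ≤ 1) :
    0 ≤ (k.choose i : ℝ) * p ^ i * (1 - p) ^ (k - i) :=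
  mul_nonneg (mul_nonneg (by positivity) (by positivity)) (pow_nonneg (by linarith) _)

private lemma tail_upper (k : ℕ) {p t a : ℝ} (hp0 : 0 ≤ p) (hp1 : p ≤ 1) (ht : 0 ≤ t) :
    (∑ i ∈ Finset.range (k+1),
      if a ≤ (i:ℝ) then (k.choose i : ℝ) * p ^ i * (1-p) ^ (k-i) else 0)
    ≤ Real.exp (-(t*a)) * ((1-p) + p * Real.exp t) ^ k := by
  have step1 : ∀ i ∈ Finset.range (k+1),
      (if a ≤ (i:ℝ) then (k.choose i : ℝ) * p ^ i * (1-p) ^ (k-i) else 0)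
      ≤ Real.exp (-(t*a)) * ((k.choose i : ℝ) * (p * Real.exp t) ^ i * (1-p) ^ (k-i)) := by
    intro i _
    have hpm := pmf_nonneg (k := k) (i := i) hp0 hp1
    have hrhs : Real.exp (-(t*a)) * ((k.choose i : ℝ) * (p * Real.exp t) ^ i * (1-p) ^ (k-i))
        = (Real.exp (-(t*a)) * Real.exp t ^ i) * ((k.choose i : ℝ) * p ^ i * (1-p) ^ (k-i)) := by
      rw [mul_pow]; ring
    split_ifs with h
    · rw [hrhs]
      have h1 : (1:ℝ) ≤ Real.exp (-(t*a)) * Real.exp t ^ i := by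
        rw [← Real.exp_nat_mul, ← Real.exp_add]
        refine Real.one_le_exp ?_
        nlinarith
      nlinarith
    · rw [hrhs]; positivity
  calc _ ≤ ∑ i ∈ Finset.range (k+1),
        Real.exp (-(t*a)) * ((k.choose i : ℝ) * (p * Real.exp t) ^ i * (1-p) ^ (k-i)) :=
      Finset.sum_le_sum step1
    _ = Real.exp (-(t*a)) * ((p * Real.exp t) + (1-p)) ^ k := by
        rw [← Finset.mul_sum, add_pow]
        congr 1
        exact Finset.sum_congr rfl fun i _ => by ring
    _ = _ := by ring_nf

private lemma tail_lower (k : ℕ) {p t a : ℝ} (hp0 : 0 ≤ p) (hp1 : p ≤ 1) (ht : 0 ≤ t) :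
    (∑ i ∈ Finset.range (k+1),
      if (i:ℝ) ≤ a then (k.choose i : ℝ) * p ^ i * (1-p) ^ (k-i) else 0)
    ≤ Real.exp (t*a) * ((1-p) + p * Real.exp (-t)) ^ k := by
  have step1 : ∀ i ∈ Finset.range (k+1),
      (if (i:ℝ) ≤ a then (k.choose i : ℝ) * p ^ i * (1-p) ^ (k-i) else 0)
      ≤ Real.exp (t*a) * ((k.choose i : ℝ) * (p * Real.exp (-t)) ^ i * (1-p) ^ (k-i)) := by
    intro i _
    have hpm := pmf_nonneg (k := k) (i := i) hp0 hp1
    have hrhs : Real.exp (t*a) * ((k.choose i : ℝ) * (p * Real.exp (-t)) ^ i * (1-p) ^ (k-i))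
        = (Real.exp (t*a) * Real.exp (-t) ^ i) * ((k.choose i : ℝ) * p ^ i * (1-p) ^ (k-i)) := by
      rw [mul_pow]; ring
    split_ifs with h
    · rw [hrhs]
      have h1 : (1:ℝ) ≤ Real.exp (t*a) * Real.exp (-t) ^ i := by
        rw [← Real.exp_nat_mul, ← Real.exp_add]
        refine Real.one_le_exp ?_
        nlinarith
      nlinarith
    · rw [hrhs]; positivity
  calc _ ≤ ∑ i ∈ Finset.range (k+1),
        Real.exp (t*a) * ((k.choose i : ℝ) * (p * Real.exp (-t)) ^ i * (1-p) ^ (k-i)) :=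
      Finset.sum_le_sum step1
    _ = Real.exp (t*a) * ((p * Real.exp (-t)) + (1-p)) ^ k := by
        rw [← Finset.mul_sum, add_pow]
        congr 1
        exact Finset.sum_congr rfl fun i _ => by ring
    _ = _ := by ring_nf

private lemma chernoff_upper (k : ℕ) {p t δ : ℝ} (hp0 : 0 ≤ p) (hp1 : p ≤ 1) (ht : 0 ≤ t) :
    Real.exp (-(t*(k*p + k*δ))) * ((1-p) + p * Real.exp t) ^ k
      ≤ Real.exp (k * (p*(1-p)*(Real.exp t - 1 - t) - t*δ)) := by
  set G := p*(1-p)*(Real.exp t - 1 - t) with hG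
  have hB : 0 ≤ (1-p) + p * Real.exp t := by
    have := Real.exp_pos t
    nlinarith
  have key : (1-p) + p * Real.exp t ≤ Real.exp (t*p) * Real.exp G := by
    have h := mgf_bound hp0 hp1 ht
    have h2 := mul_le_mul_of_nonneg_left h (Real.exp_pos (t*p)).le
    have e1 : Real.exp (t*p) * Real.exp (-(t*p)) = 1 := by
      rw [← Real.exp_add]; simp
    have e2 : Real.exp (t*p) * Real.exp ((1-p)*t) = Real.exp t := by
      rw [← Real.exp_add]; congr 1; ring
    calc (1-p) + p * Real.exp t
        = Real.exp (t*p) * ((1-p) * Real.exp (-(t*p)) + p * Real.exp ((1-p)*t)) := by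
          linear_combination (p-1) * e1 - p * e2
      _ ≤ _ := h2
  calc Real.exp (-(t*(k*p + k*δ))) * ((1-p) + p * Real.exp t) ^ k
      ≤ Real.exp (-(t*(k*p + k*δ))) * (Real.exp (t*p) * Real.exp G) ^ k := by
        apply mul_le_mul_of_nonneg_left (pow_le_pow_left₀ hB key k) (Real.exp_pos _).le
    _ = Real.exp (k * (G - t*δ)) := by
        rw [← Real.exp_add, ← Real.exp_nat_mul, ← Real.exp_add]
        congr 1; ring
    _ = _ := by rw [hG]

private lemma chernoff_lower (k : ℕ) {p t δ : ℝ} (hp0 : 0 ≤ p) (hp1 : p ≤ 1) (ht : 0 ≤ t) :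
    Real.exp (t*(k*p - k*δ)) * ((1-p) + p * Real.exp (-t)) ^ k
      ≤ Real.exp (k * (p*(1-p)*(Real.exp t - 1 - t) - t*δ)) := by
  set G := p*(1-p)*(Real.exp t - 1 - t) with hG
  have hB : 0 ≤ (1-p) + p * Real.exp (-t) := by
    have := Real.exp_pos (-t)
    nlinarith
  have key : (1-p) + p * Real.exp (-t) ≤ Real.exp (-(t*p)) * Real.exp G := by
    have h := mgf_bound (p := 1-p) (by linarith) (by linarith) ht
    have h2 := mul_le_mul_of_nonneg_left h (Real.exp_pos (-(t*p))).le
    have e1 : Real.exp (-(t*p)) * Real.exp ((1-(1-p))*t) = 1 := by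
      rw [← Real.exp_add]; rw [show -(t*p) + (1-(1-p))*t = 0 by ring, Real.exp_zero]
    have e2 : Real.exp (-(t*p)) * Real.exp (-(t*(1-p))) = Real.exp (-t) := by
      rw [← Real.exp_add]; congr 1; ring
    have hGsym : (1-p) * (1-(1-p)) * (Real.exp t - 1 - t) = G := by rw [hG]; ring
    calc (1-p) + p * Real.exp (-t)
        = Real.exp (-(t*p)) * ((1-(1-p)) * Real.exp (-(t*(1-p))) + (1-p) * Real.exp ((1-(1-p))*t)) := by
          linear_combination (p-1) * e1 - p * e2
      _ ≤ Real.exp (-(t*p)) * Real.exp ((1-p) * (1-(1-p)) * (Real.exp t - 1 - t)) := h2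
      _ = _ := by rw [hGsym]
  calc Real.exp (t*(k*p - k*δ)) * ((1-p) + p * Real.exp (-t)) ^ k
      ≤ Real.exp (t*(k*p - k*δ)) * (Real.exp (-(t*p)) * Real.exp G) ^ k := by
        apply mul_le_mul_of_nonneg_left (pow_le_pow_left₀ hB key k) (Real.exp_pos _).le
    _ = Real.exp (k * (G - t*δ)) := by
        rw [← Real.exp_add, ← Real.exp_nat_mul, ← Real.exp_add]
        congr 1; ring
    _ = _ := by rw [hG]

theorem qerror_bound_bernstein (k : ℕ) (hk : 1 ≤ k) (p : ℝ) (hp0 : 0 < p) (hp1 : p ≤ 1)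
    (q : ℝ) (hq : 1 < q) :
    1 - Real.exp (-(k * (p * q - p) ^ 2) / (2 * (p * (1 - p)) + 2 * (p * q - p) / 3))
      - Real.exp (-(k * (p - p / q) ^ 2) / (2 * (p * (1 - p)) + 2 * (p - p / q) / 3)) ≤
    binomProb k p (fun i => k * p / q ≤ (i : ℝ) ∧ (i : ℝ) ≤ q * k * p) := by
  classical
  have hq0 : 0 < q := by linarith
  set σ2 := p * (1 - p) with hσ2
  have hσ : 0 ≤ σ2 := mul_nonneg hp0.le (by linarith)
  set δ1 := p * q - p with hδ1def
  set δ2 := p - p / q with hδ2def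
  have hδ1 : 0 < δ1 := by rw [hδ1def]; nlinarith
  have hδ2 : 0 < δ2 := by
    have : p / q < p := div_lt_self hp0 hq
    rw [hδ2def]; linarith
  set t1 := δ1 / (σ2 + δ1/3) with ht1def
  set t2 := δ2 / (σ2 + δ2/3) with ht2def
  have hD1 : 0 < σ2 + δ1/3 := add_pos_of_nonneg_of_pos hσ (div_pos hδ1 (by norm_num))
  have hD2 : 0 < σ2 + δ2/3 := add_pos_of_nonneg_of_pos hσ (div_pos hδ2 (by norm_num))
  have ht1 : 0 < t1 := div_pos hδ1 hD1
  have ht2 : 0 < t2 := div_pos hδ2 hD2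
  set E1 := Real.exp (-(k * (p * q - p) ^ 2) / (2 * (p * (1 - p)) + 2 * (p * q - p) / 3)) with hE1
  set E2 := Real.exp (-(k * (p - p / q) ^ 2) / (2 * (p * (1 - p)) + 2 * (p - p / q) / 3)) with hE2
  -- upper tail
  have hThi : (∑ i ∈ Finset.range (k+1),
      if q * k * p ≤ (i:ℝ) then (k.choose i : ℝ) * p ^ i * (1-p) ^ (k-i) else 0) ≤ E1 := by
    calc _ ≤ Real.exp (-(t1*(q*k*p))) * ((1-p) + p * Real.exp t1) ^ k :=
          tail_upper k hp0.le hp1 ht1.le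
      _ = Real.exp (-(t1*(k*p + k*δ1))) * ((1-p) + p * Real.exp t1) ^ k := by
          rw [show q*(k:ℝ)*p = k*p + k*δ1 by rw [hδ1def]; ring]
      _ ≤ Real.exp (k * (σ2*(Real.exp t1 - 1 - t1) - t1*δ1)) := chernoff_upper k hp0.le hp1 ht1.le
      _ ≤ E1 := by
          rw [hE1]
          apply Real.exp_le_exp.mpr
          have hb := bern_key hσ hδ1
          rw [← ht1def] at hb
          calc (k:ℝ) * (σ2*(Real.exp t1 - 1 - t1) - t1*δ1)
              ≤ (k:ℝ) * (-(δ1^2) / (2*σ2 + 2*δ1/3)) := by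
                apply mul_le_mul_of_nonneg_left _ (Nat.cast_nonneg k)
                linarith [hb]
            _ = -(k * (p * q - p) ^ 2) / (2 * (p * (1 - p)) + 2 * (p * q - p) / 3) := by
                rw [hδ1def, hσ2]; ring
  -- lower tail
  have hTlo : (∑ i ∈ Finset.range (k+1),
      if (i:ℝ) ≤ k * p / q then (k.choose i : ℝ) * p ^ i * (1-p) ^ (k-i) else 0) ≤ E2 := by
    calc _ ≤ Real.exp (t2*(k*p/q)) * ((1-p) + p * Real.exp (-t2)) ^ k :=
          tail_lower k hp0.le hp1 ht2.le
      _ = Real.exp (t2*(k*p - k*δ2)) * ((1-p) + p * Real.exp (-t2)) ^ k := by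
          rw [show (k:ℝ)*p/q = k*p - k*δ2 by rw [hδ2def]; field_simp; ring]
      _ ≤ Real.exp (k * (σ2*(Real.exp t2 - 1 - t2) - t2*δ2)) := chernoff_lower k hp0.le hp1 ht2.le
      _ ≤ E2 := by
          rw [hE2]
          apply Real.exp_le_exp.mpr
          have hb := bern_key hσ hδ2
          rw [← ht2def] at hb
          calc (k:ℝ) * (σ2*(Real.exp t2 - 1 - t2) - t2*δ2)
              ≤ (k:ℝ) * (-(δ2^2) / (2*σ2 + 2*δ2/3)) := by
                apply mul_le_mul_of_nonneg_left _ (Nat.cast_nonneg k)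
                linarith [hb]
            _ = -(k * (p - p / q) ^ 2) / (2 * (p * (1 - p)) + 2 * (p - p / q) / 3) := by
                rw [hδ2def, hσ2]; ring
  -- total mass
  have hsum : (∑ i ∈ Finset.range (k+1), (k.choose i : ℝ) * p ^ i * (1-p) ^ (k-i)) = 1 := by
    have h := add_pow p (1-p) k
    have h1 : ((p + (1-p)) : ℝ) ^ k = 1 := by norm_num
    rw [h1] at h
    exact (Finset.sum_congr rfl fun i _ => by ring).trans h.symm
  -- split
  have hkey : ∀ i ∈ Finset.range (k+1),
      (k.choose i : ℝ) * p ^ i * (1-p) ^ (k-i) ≤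
      (if k * p / q ≤ (i:ℝ) ∧ (i:ℝ) ≤ q * k * p
        then (k.choose i : ℝ) * p ^ i * (1-p) ^ (k-i) else 0)
      + ((if (i:ℝ) ≤ k * p / q then (k.choose i : ℝ) * p ^ i * (1-p) ^ (k-i) else 0)
        + (if q * k * p ≤ (i:ℝ) then (k.choose i : ℝ) * p ^ i * (1-p) ^ (k-i) else 0)) := by
    intro i _
    have hpm : 0 ≤ (k.choose i : ℝ) * p ^ i * (1-p) ^ (k-i) := pmf_nonneg hp0.le hp1
    by_cases hP : k * p / q ≤ (i:ℝ) ∧ (i:ℝ) ≤ q * k * p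
    · rw [if_pos hP]
      split_ifs <;> linarith
    · rw [if_neg hP]
      rcases not_and_or.mp hP with h | h
      · rw [if_pos (le_of_not_ge h)]
        split_ifs <;> linarith
      · rw [if_pos (le_of_not_ge h)]
        split_ifs <;> linarith
  have hsplit := Finset.sum_le_sum hkey
  rw [Finset.sum_add_distrib, Finset.sum_add_distrib, hsum] at hsplit
  have hbp : binomProb k p (fun i => k * p / q ≤ (i : ℝ) ∧ (i : ℝ) ≤ q * k * p)
      = ∑ i ∈ Finset.range (k+1),
        if k * p / q ≤ (i:ℝ) ∧ (i:ℝ) ≤ q * k * p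
          then (k.choose i : ℝ) * p ^ i * (1-p) ^ (k-i) else 0 := by
    rw [binomProb]
    congr!
  rw [hbp]
  linarith
end

section
/- Bound 5: For every natural number k ≥ 1, real p ∈ (0,1], and real q ≥ 1 with p·q > 1, a binomial B(k,p) random variable X̂ satisfies P(k·p/q < X̂ < q·k·p) ≥ 1 − exp(−2·p²·(q−1)²·k) − exp(−2k·(pq−1)²/q²). (Q-error bound from Hoeffding's inequality for uniform sampling with replacement.) -/
open Real Finset

private lemma u_pos {p : ℝ} (hp0 : 0 ≤ p) (hp1 : p ≤ 1) (t : ℝ) :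
    0 < p * Real.exp t + (1 - p) := by
  rcases eq_or_lt_of_le hp0 with h | h
  · simp [← h]
  · nlinarith [Real.exp_pos t, mul_pos h (Real.exp_pos t)]

private lemma hoeffding_lemma {p : ℝ} (hp0 : 0 ≤ p) (hp1 : p ≤ 1) (t : ℝ) :
    p * Real.exp t + (1 - p) ≤ Real.exp (p * t + t ^ 2 / 8) := by
  set u : ℝ → ℝ := fun s => p * Real.exp s + (1 - p) with hu_def
  have hu : ∀ s, 0 < u s := fun s => u_pos hp0 hp1 s
  have hu' : ∀ s, HasDerivAt u (p * Real.exp s) s := by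
    intro s
    exact ((Real.hasDerivAt_exp s).const_mul p).add_const (1 - p)
  set g : ℝ → ℝ := fun s => p + s / 4 - p * Real.exp s / u s with hg_def
  set f : ℝ → ℝ := fun s => p * s + s ^ 2 / 8 - Real.log (u s) with hf_def
  have hf' : ∀ s, HasDerivAt f (g s) s := by
    intro s
    have h1 : HasDerivAt (fun s : ℝ => p * s + s ^ 2 / 8) (p + s * 2 / 8 * 1) s := by
      have := ((hasDerivAt_id s).const_mul p).add
        (((hasDerivAt_pow 2 s)).div_const 8)
      exact this.congr_deriv (by norm_num; ring)
    have h2 : HasDerivAt (fun s => Real.log (u s)) (p * Real.exp s / u s) s :=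
      (hu' s).log (ne_of_gt (hu s))
    have := h1.sub h2
    refine this.congr_deriv ?_
    simp only [hg_def]; ring
  have hg' : ∀ s, HasDerivAt g (1 / 4 - p * Real.exp s * (1 - p) / (u s) ^ 2) s := by
    intro s
    have hdiv : HasDerivAt (fun s => p * Real.exp s / u s)
        ((p * Real.exp s * u s - p * Real.exp s * (p * Real.exp s)) / (u s) ^ 2) s :=
      (((Real.hasDerivAt_exp s).const_mul p)).div (hu' s) (ne_of_gt (hu s))
    have h1 : HasDerivAt (fun s : ℝ => p + s / 4) (1 / 4) s := by
      simpa using ((hasDerivAt_id s).div_const 4).const_add p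
    have := h1.sub hdiv
    refine this.congr_deriv ?_
    have : p * Real.exp s * u s - p * Real.exp s * (p * Real.exp s)
        = p * Real.exp s * (1 - p) := by
      simp only [hu_def]; ring
    rw [this]
  have hg'nonneg : ∀ s, 0 ≤ 1 / 4 - p * Real.exp s * (1 - p) / (u s) ^ 2 := by
    intro s
    rw [sub_nonneg, div_le_iff₀ (pow_pos (hu s) 2)]
    have h := sq_nonneg (p * Real.exp s - (1 - p))
    have : (u s) ^ 2 = (p * Real.exp s + (1 - p)) ^ 2 := by simp [hu_def]
    nlinarith
  have hgmono : Monotone g :=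
    monotone_of_deriv_nonneg (fun s => (hg' s).differentiableAt)
      (fun s => by rw [(hg' s).deriv]; exact hg'nonneg s)
  have hg0 : g 0 = 0 := by
    have h1 : u 0 = 1 := by simp [hu_def]
    simp [hg_def, h1]
  have hfdiff : Differentiable ℝ f := fun s => (hf' s).differentiableAt
  have hf0 : f 0 = 0 := by
    have h1 : u 0 = 1 := by simp [hu_def]
    simp [hf_def, h1]
  have hfnonneg : 0 ≤ f t := by
    rcases le_or_gt 0 t with ht | ht
    · have hmono : MonotoneOn f (Set.Ici 0) := by
        apply monotoneOn_of_deriv_nonneg (convex_Ici 0) hfdiff.continuous.continuousOn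
          (hfdiff.differentiableOn)
        intro x hx
        rw [(hf' x).deriv]
        rw [interior_Ici] at hx
        have := hgmono (le_of_lt hx)
        rw [hg0] at this
        exact this
      have := hmono (Set.self_mem_Ici) (Set.mem_Ici.mpr ht) ht
      rw [hf0] at this; exact this
    · have hanti : AntitoneOn f (Set.Iic 0) := by
        apply antitoneOn_of_deriv_nonpos (convex_Iic 0) hfdiff.continuous.continuousOn
          (hfdiff.differentiableOn)
        intro x hx
        rw [(hf' x).deriv]
        rw [interior_Iic] at hx
        have := hgmono (le_of_lt hx)
        rw [hg0] at this
        exact this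
      have := hanti (Set.mem_Iic.mpr ht.le) (Set.self_mem_Iic) ht.le
      rw [hf0] at this; exact this
  have hlog : Real.log (u t) ≤ p * t + t ^ 2 / 8 := by
    have : f t = p * t + t ^ 2 / 8 - Real.log (u t) := rfl
    linarith [hfnonneg, this ▸ hfnonneg]
  exact (Real.log_le_iff_le_exp (hu t)).mp hlog

private lemma binom_mgf (k : ℕ) (p t : ℝ) :
    ∑ i ∈ Finset.range (k + 1),
      (k.choose i : ℝ) * p ^ i * (1 - p) ^ (k - i) * Real.exp (t * i)
      = (p * Real.exp t + (1 - p)) ^ k := by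
  rw [add_pow]
  apply Finset.sum_congr rfl
  intro i _
  rw [mul_pow, mul_comm t (i : ℝ), Real.exp_nat_mul]
  ring

private lemma chernoff (k : ℕ) (p : ℝ) (hp0 : 0 ≤ p) (hp1 : p ≤ 1) (ε : ℝ) (hε : 0 ≤ ε) :
    ∑ i ∈ Finset.range (k + 1),
      (if (k : ℝ) * p + k * ε ≤ (i : ℝ) then (k.choose i : ℝ) * p ^ i * (1 - p) ^ (k - i) else 0)
      ≤ Real.exp (-2 * k * ε ^ 2) := by
  set t : ℝ := 4 * ε with ht_def
  have ht : 0 ≤ t := by positivity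
  set a : ℝ := (k : ℝ) * p + k * ε with ha_def
  have hw : ∀ i : ℕ, 0 ≤ (k.choose i : ℝ) * p ^ i * (1 - p) ^ (k - i) := by
    intro i
    have : (0:ℝ) ≤ 1 - p := by linarith
    positivity
  have step1 : ∑ i ∈ Finset.range (k + 1),
      (if a ≤ (i : ℝ) then (k.choose i : ℝ) * p ^ i * (1 - p) ^ (k - i) else 0)
      ≤ ∑ i ∈ Finset.range (k + 1),
      (k.choose i : ℝ) * p ^ i * (1 - p) ^ (k - i) * (Real.exp (t * i) * Real.exp (-(t * a))) := by
    apply Finset.sum_le_sum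
    intro i _
    split_ifs with h
    · have h1 : (1:ℝ) ≤ Real.exp (t * i) * Real.exp (-(t * a)) := by
        rw [← Real.exp_add]
        have : 0 ≤ t * i + -(t * a) := by nlinarith
        simpa using Real.one_le_exp this
      nlinarith [hw i]
    · exact mul_nonneg (hw i) (by positivity)
  have step2 : ∑ i ∈ Finset.range (k + 1),
      (k.choose i : ℝ) * p ^ i * (1 - p) ^ (k - i) * (Real.exp (t * i) * Real.exp (-(t * a)))
      = (p * Real.exp t + (1 - p)) ^ k * Real.exp (-(t * a)) := by
    calc ∑ i ∈ Finset.range (k + 1),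
        (k.choose i : ℝ) * p ^ i * (1 - p) ^ (k - i) * (Real.exp (t * i) * Real.exp (-(t * a)))
        = ∑ i ∈ Finset.range (k + 1),
          ((k.choose i : ℝ) * p ^ i * (1 - p) ^ (k - i) * Real.exp (t * i)) * Real.exp (-(t * a)) := by
          apply Finset.sum_congr rfl; intro i _; ring
      _ = (∑ i ∈ Finset.range (k + 1),
          (k.choose i : ℝ) * p ^ i * (1 - p) ^ (k - i) * Real.exp (t * i)) * Real.exp (-(t * a)) := by
          rw [Finset.sum_mul]
      _ = (p * Real.exp t + (1 - p)) ^ k * Real.exp (-(t * a)) := by rw [binom_mgf]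
  have step3 : (p * Real.exp t + (1 - p)) ^ k * Real.exp (-(t * a))
      ≤ Real.exp (-2 * k * ε ^ 2) := by
    have h1 : (p * Real.exp t + (1 - p)) ^ k ≤ Real.exp (p * t + t ^ 2 / 8) ^ k :=
      pow_le_pow_left₀ (le_of_lt (by
        rcases eq_or_lt_of_le hp0 with h | h
        · simp [← h]
        · nlinarith [Real.exp_pos t, mul_pos h (Real.exp_pos t)]))
        (by nlinarith [hoeffding_lemma hp0 hp1 t]) k
    have h2 : Real.exp (p * t + t ^ 2 / 8) ^ k * Real.exp (-(t * a))
        = Real.exp ((k : ℝ) * (p * t + t ^ 2 / 8) - t * a) := by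
      rw [← Real.exp_nat_mul, ← Real.exp_add]
      ring_nf
    have h3 : (k : ℝ) * (p * t + t ^ 2 / 8) - t * a = -2 * k * ε ^ 2 := by
      rw [ht_def, ha_def]; ring
    calc (p * Real.exp t + (1 - p)) ^ k * Real.exp (-(t * a))
        ≤ Real.exp (p * t + t ^ 2 / 8) ^ k * Real.exp (-(t * a)) := by
          apply mul_le_mul_of_nonneg_right h1 (Real.exp_nonneg _)
      _ = Real.exp ((k : ℝ) * (p * t + t ^ 2 / 8) - t * a) := h2
      _ = Real.exp (-2 * k * ε ^ 2) := by rw [h3]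
  linarith [step1, step2 ▸ step1, step3]


theorem qerror_bound_hoeffding (k : ℕ) (hk : 1 ≤ k) (p : ℝ) (hp0 : 0 < p) (hp1 : p ≤ 1)
    (q : ℝ) (hq : 1 ≤ q) (hpq : 1 < p * q) :
    1 - Real.exp (-2 * p ^ 2 * (q - 1) ^ 2 * k)
      - Real.exp (-(2 * k * (p * q - 1) ^ 2) / q ^ 2) ≤
    binomProb k p (fun i => k * p / q < (i : ℝ) ∧ (i : ℝ) < q * k * p) := by
  have hq0 : (0:ℝ) < q := lt_of_lt_of_le one_pos hq
  have hw : ∀ i : ℕ, 0 ≤ (k.choose i : ℝ) * p ^ i * (1 - p) ^ (k - i) := by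
    intro i
    have h1 : (0:ℝ) ≤ 1 - p := by linarith
    positivity
  -- total mass is 1
  have hsum1 : ∑ i ∈ Finset.range (k + 1),
      (k.choose i : ℝ) * p ^ i * (1 - p) ^ (k - i) = 1 := by
    have h2 : (p * Real.exp 0 + (1 - p)) = 1 := by rw [Real.exp_zero]; ring
    have h := binom_mgf k p 0
    rw [h2, one_pow] at h
    simpa using h
  -- upper tail
  have hεh : (0:ℝ) ≤ p * q - p := by nlinarith
  have hhigh : ∑ i ∈ Finset.range (k + 1),
      (if q * (k:ℝ) * p ≤ (i : ℝ) then (k.choose i : ℝ) * p ^ i * (1 - p) ^ (k - i) else 0)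
      ≤ Real.exp (-2 * p ^ 2 * (q - 1) ^ 2 * k) := by
    have h := chernoff k p hp0.le hp1 (p * q - p) hεh
    have ethr : (k:ℝ) * p + (k:ℝ) * (p * q - p) = q * (k:ℝ) * p := by ring
    have eexp : (-2 * (k:ℝ) * (p * q - p) ^ 2) = -2 * p ^ 2 * (q - 1) ^ 2 * k := by ring
    rw [ethr, eexp] at h
    exact h
  -- lower tail via reflection
  have hεl : (0:ℝ) ≤ p - p / q := by
    have : p / q ≤ p := div_le_self hp0.le hq
    linarith
  have hlow : ∑ i ∈ Finset.range (k + 1),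
      (if (i : ℝ) ≤ (k:ℝ) * p / q then (k.choose i : ℝ) * p ^ i * (1 - p) ^ (k - i) else 0)
      ≤ Real.exp (-(2 * k * (p * q - 1) ^ 2) / q ^ 2) := by
    have hrefl : ∑ i ∈ Finset.range (k + 1),
        (if (i : ℝ) ≤ (k:ℝ) * p / q then (k.choose i : ℝ) * p ^ i * (1 - p) ^ (k - i) else 0)
        = ∑ j ∈ Finset.range (k + 1),
        (if (k:ℝ) * (1 - p) + (k:ℝ) * (p - p / q) ≤ (j : ℝ) then
          (k.choose j : ℝ) * (1 - p) ^ j * (1 - (1 - p)) ^ (k - j) else 0) := by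
      rw [← Finset.sum_range_reflect]
      apply Finset.sum_congr rfl
      intro j hj
      have hjk : j ≤ k := Nat.lt_succ_iff.mp (Finset.mem_range.mp hj)
      have h1 : k + 1 - 1 - j = k - j := by omega
      rw [h1]
      have hcast : ((k - j : ℕ) : ℝ) = (k : ℝ) - j := by
        rw [Nat.cast_sub hjk]
      have ethr : (k:ℝ) * (1 - p) + (k:ℝ) * (p - p / q) = (k:ℝ) - (k:ℝ) * p / q := by ring
      have hiff : (((k - j : ℕ) : ℝ) ≤ (k:ℝ) * p / q)
          ↔ ((k:ℝ) * (1 - p) + (k:ℝ) * (p - p / q) ≤ (j : ℝ)) := by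
        rw [hcast, ethr]
        constructor <;> intro h <;> linarith
      have hbranch : (k.choose (k - j) : ℝ) * p ^ (k - j) * (1 - p) ^ (k - (k - j))
          = (k.choose j : ℝ) * (1 - p) ^ j * (1 - (1 - p)) ^ (k - j) := by
        rw [Nat.choose_symm hjk, Nat.sub_sub_self hjk, sub_sub_cancel]
        ring
      exact if_congr hiff hbranch rfl
    rw [hrefl]
    have h := chernoff k (1 - p) (by linarith) (by linarith) (p - p / q) hεl
    refine le_trans h (Real.exp_le_exp.mpr ?_)
    have e1 : p - p / q = (p * q - p) / q := by field_simp
    have e2 : -2 * (k:ℝ) * ((p * q - p) / q) ^ 2 = (-(2 * k * (p * q - p) ^ 2)) / q ^ 2 := by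
      rw [div_pow]; ring
    rw [e1, e2, neg_div, neg_div, neg_le_neg_iff]
    have h3 : (p * q - 1) ^ 2 ≤ (p * q - p) ^ 2 := by nlinarith
    have hk0 : (0:ℝ) ≤ (k:ℝ) := Nat.cast_nonneg k
    gcongr
  -- union bound
  have hcover : ∀ i ∈ Finset.range (k + 1),
      (k.choose i : ℝ) * p ^ i * (1 - p) ^ (k - i) ≤
      (if (k:ℝ) * p / q < (i : ℝ) ∧ (i : ℝ) < q * (k:ℝ) * p then
        (k.choose i : ℝ) * p ^ i * (1 - p) ^ (k - i) else 0)
      + ((if (i : ℝ) ≤ (k:ℝ) * p / q then (k.choose i : ℝ) * p ^ i * (1 - p) ^ (k - i) else 0)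
      + (if q * (k:ℝ) * p ≤ (i : ℝ) then (k.choose i : ℝ) * p ^ i * (1 - p) ^ (k - i) else 0)) := by
    intro i _
    rcases le_or_gt (i : ℝ) ((k:ℝ) * p / q) with h1 | h1
    · rw [if_pos h1]
      split_ifs <;> linarith [hw i]
    · rcases le_or_gt (q * (k:ℝ) * p) (i : ℝ) with h2 | h2
      · rw [if_pos h2]
        split_ifs <;> linarith [hw i]
      · rw [if_pos ⟨h1, h2⟩]
        split_ifs <;> linarith [hw i]
  have hsplit := Finset.sum_le_sum hcover
  rw [hsum1, Finset.sum_add_distrib, Finset.sum_add_distrib] at hsplit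
  have hb : binomProb k p (fun i => (k:ℝ) * p / q < (i : ℝ) ∧ (i : ℝ) < q * (k:ℝ) * p)
      = ∑ i ∈ Finset.range (k + 1),
        (if (k:ℝ) * p / q < (i : ℝ) ∧ (i : ℝ) < q * (k:ℝ) * p then
          (k.choose i : ℝ) * p ^ i * (1 - p) ^ (k - i) else 0) := by
    unfold binomProb
    apply Finset.sum_congr rfl
    intro i _
    congr 1
  rw [hb]
  linarith
end
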